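/- Let n ≥ 2 and consider the graceful colouring of K_{n+1}: label vertices 0, 1, ..., n and colour edge uv with |u - v|. Then K_{n+1} contains at least 2^{⌊(n-1)/2⌋} distinct heterochromatic spanning trees. -/

import Mathlib

open SimpleGraph Set

/-- The graceful colouring of `K_{n+1}`: the edge joining `u` and `v` gets colour
`|u - v|`. -/
def gcol (n : ℕ) : Sym2 (Fin (n + 1)) → ℕ :=
  Sym2.lift ⟨fun a b => max a.val b.val - min a.val b.val, fun a b => by
    simp [max_comm, min_comm]⟩

namespace Stmt6

variable (n : ℕ)

def nn : Fin (n + 1) := ⟨n, Nat.lt_succ_self n⟩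

def SWp (f : Fin ((n - 1) / 2) → Bool) (x : ℕ) : Prop :=
  ∃ k : Fin ((n - 1) / 2), f k = true ∧ (x = k.val + 1 ∨ x = n - (k.val + 1))

instance (f) (x : ℕ) : Decidable (SWp n f x) := by unfold SWp; infer_instance

def P (f : Fin ((n - 1) / 2) → Bool) (v : Fin (n + 1)) : Fin (n + 1) :=
  if SWp n f v.val then nn n else 0

def E (f : Fin ((n - 1) / 2) → Bool) : Set (Sym2 (Fin (n + 1))) :=
  (fun v => s(v, P n f v)) '' {v | v ≠ 0}

def T (f : Fin ((n - 1) / 2) → Bool) : SimpleGraph (Fin (n + 1)) := fromEdgeSet (E n f)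

variable {n} {f g : Fin ((n - 1) / 2) → Bool}

lemma swp_bounds {x : ℕ} (h : SWp n f x) : 1 ≤ x ∧ x < n := by
  obtain ⟨k, -, hx⟩ := h
  have := k.isLt
  omega

lemma swp_sub {x : ℕ} (h : SWp n f x) : SWp n f (n - x) := by
  obtain ⟨k, hk, hx⟩ := h
  have := k.isLt
  rcases hx with hx | hx
  · exact ⟨k, hk, Or.inr (by omega)⟩
  · exact ⟨k, hk, Or.inl (by omega)⟩

lemma P_mem (v : Fin (n + 1)) : P n f v = 0 ∨ P n f v = nn n := by
  unfold P; split <;> simp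

lemma P_ne {v : Fin (n + 1)} (hv : v ≠ 0) : P n f v ≠ v := by
  unfold P
  split
  · next h =>
    intro he
    have := (swp_bounds h).2
    have : (nn n).val = v.val := by rw [he]
    simp [nn] at this; omega
  · exact fun he => hv he.symm

lemma P_nn : P n f (nn n) = 0 := by
  unfold P
  rw [if_neg]
  rintro ⟨k, -, h | h⟩ <;> (have := k.isLt; simp [nn] at h; omega)

lemma edgeSet_T : (T n f).edgeSet = E n f := by
  rw [T, edgeSet_fromEdgeSet]
  rw [sdiff_eq_left]
  rw [Set.disjoint_left]
  rintro e ⟨v, hv, rfl⟩ hd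
  rw [Sym2.mem_diagSet, Sym2.mk_isDiag_iff] at hd
  exact P_ne hv hd.symm

lemma adj_T {v : Fin (n + 1)} (hv : v ≠ 0) : (T n f).Adj v (P n f v) := by
  rw [T, fromEdgeSet_adj]
  exact ⟨⟨v, hv, rfl⟩, (P_ne hv).symm⟩

lemma adj_T_iff {v w : Fin (n + 1)} (hv : v ≠ 0) (hv' : v ≠ nn n) :
    (T n f).Adj v w → w = P n f v := by
  rw [T, fromEdgeSet_adj]
  rintro ⟨⟨u, hu, he⟩, -⟩
  rw [Sym2.eq_iff] at he
  rcases he with ⟨h1, h2⟩ | ⟨h1, h2⟩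
  · subst h1; exact h2.symm
  · exfalso
    rcases P_mem (f := f) u with h | h <;> rw [h] at h2
    · exact hv h2.symm
    · exact hv' h2.symm

lemma nn_ne_zero (hn : 2 ≤ n) : nn n ≠ 0 := by
  intro h
  have : (nn n).val = (0 : Fin (n+1)).val := by rw [h]
  simp [nn] at this; omega

lemma connected_T (hn : 2 ≤ n) : (T n f).Connected := by
  have hreach : ∀ v : Fin (n + 1), (T n f).Reachable v 0 := by
    intro v
    by_cases hv : v = 0
    · subst hv; exact Reachable.refl 0
    · have hadj := adj_T (f := f) hv
      have hnn : (T n f).Reachable (nn n) 0 := by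
        have := adj_T (f := f) (nn_ne_zero hn)
        rw [P_nn] at this
        exact this.reachable
      rcases P_mem (f := f) v with h | h
      · rw [h] at hadj; exact hadj.reachable
      · rw [h] at hadj; exact hadj.reachable.trans hnn
  rw [connected_iff]
  exact ⟨fun u v => (hreach u).trans (hreach v).symm, ⟨0⟩⟩

lemma first_edge_mem {V : Type*} {G : SimpleGraph V} {a b : V} {p : G.Walk a b}
    (hp : ¬ p.Nil) : s(a, p.getVert 1) ∈ p.edges := by
  cases p with
  | nil => exact absurd SimpleGraph.Walk.Nil.nil hp
  | cons h q => simp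

lemma acyclic_T : (T n f).IsAcyclic := by
  intro v c hc
  obtain ⟨u, hu, hu0, hun⟩ : ∃ u ∈ c.support, u ≠ 0 ∧ u ≠ nn n := by
    by_contra hcon
    push_neg at hcon
    have hsub : ∀ x ∈ c.support.tail, x ∈ ({0, nn n} : Finset (Fin (n+1))) := by
      intro x hx
      have h1 := hcon x (List.mem_of_mem_tail hx)
      by_cases h : x = 0
      · simp [h]
      · simp [h1 h]
    have h2 : c.support.tail.toFinset ⊆ {0, nn n} := fun x hx =>
      hsub x (List.mem_toFinset.mp hx)
    have h3 := Finset.card_le_card h2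
    have h4 : ({0, nn n} : Finset (Fin (n+1))).card ≤ 2 :=
      Finset.card_insert_le _ _ |>.trans (by simp)
    have h5 : c.support.tail.toFinset.card = c.support.tail.length :=
      List.toFinset_card_of_nodup hc.support_nodup
    have h6 : c.support.tail.length = c.length := by
      have := c.length_support
      have : c.support.length = c.length + 1 := c.length_support
      cases hs : c.support with
      | nil => exact absurd hs c.support_ne_nil
      | cons a l => rw [hs] at this; simp at this ⊢; omega
    have h7 := hc.three_le_length
    omega
  have hc' : (c.rotate u hu).IsCycle := hc.rotate hu
  set c' := c.rotate u hu with hc'def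
  have hnil : ¬ c'.Nil := hc'.not_nil
  obtain ⟨x, hadj, q, hq⟩ := SimpleGraph.Walk.not_nil_iff.mp hnil
  have hlen : c'.length = c.length := by
    have h := (SimpleGraph.Walk.rotate_edges c u hu).perm.length_eq
    rw [SimpleGraph.Walk.length_edges, SimpleGraph.Walk.length_edges] at h
    exact h
  have hlq : 2 ≤ q.length := by
    have h7 := hc.three_le_length
    rw [hq] at hlen
    simp only [SimpleGraph.Walk.length_cons] at hlen
    omega
  have hqrnil : ¬ q.reverse.Nil := by
    rw [SimpleGraph.Walk.not_nil_iff_lt_length, SimpleGraph.Walk.length_reverse]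
    omega
  have hadj2 : (T n f).Adj u (q.reverse.getVert 1) :=
    q.reverse.adj_snd hqrnil
  have hx : x = P n f u := adj_T_iff hu0 hun hadj
  have hy : q.reverse.getVert 1 = P n f u := adj_T_iff hu0 hun hadj2
  have hmem : s(u, q.reverse.getVert 1) ∈ q.reverse.edges := first_edge_mem hqrnil
  have hmem' : s(u, P n f u) ∈ q.edges := by
    rw [← hy]
    rw [SimpleGraph.Walk.edges_reverse, List.mem_reverse] at hmem
    exact hmem
  have hnd : (s(u, x) :: q.edges).Nodup := by
    have := hc'.isCircuit.isTrail.edges_nodup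
    rwa [hq, SimpleGraph.Walk.edges_cons] at this
  rw [List.nodup_cons] at hnd
  rw [← hx] at hmem'
  exact hnd.1 hmem'

lemma isTree_T (hn : 2 ≤ n) : (T n f).IsTree :=
  ⟨connected_T hn, acyclic_T⟩

lemma gcol_eq (v : Fin (n + 1)) :
    gcol n s(v, P n f v) = if SWp n f v.val then n - v.val else v.val := by
  have hvlt := v.isLt
  unfold P
  split
  · simp only [gcol, Sym2.lift_mk, nn, Fin.val_zero, Fin.val_mk]
    omega
  · simp only [gcol, Sym2.lift_mk, nn, Fin.val_zero, Fin.val_mk]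
    omega

lemma injOn_gcol : Set.InjOn (gcol n) (T n f).edgeSet := by
  rw [edgeSet_T]
  rintro e1 ⟨v, hv, rfl⟩ e2 ⟨w, hw, rfl⟩ hco
  simp only [gcol_eq] at hco
  have hvlt := v.isLt
  have hwlt := w.isLt
  have hveq : ∀ u : Fin (n+1), u.val = v.val → u = v := fun u h => Fin.ext h
  by_cases hsv : SWp n f v.val <;> by_cases hsw : SWp n f w.val
  · rw [if_pos hsv, if_pos hsw] at hco
    have h1 := (swp_bounds hsv).2
    have h2 := (swp_bounds hsw).2
    have : v = w := Fin.ext (by omega)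
    rw [this]
  · rw [if_pos hsv, if_neg hsw] at hco
    exfalso
    have := swp_sub hsv
    rw [hco] at this
    exact hsw this
  · rw [if_neg hsv, if_pos hsw] at hco
    exfalso
    have := swp_sub hsw
    rw [← hco] at this
    exact hsv this
  · rw [if_neg hsv, if_neg hsw] at hco
    have : v = w := Fin.ext hco
    rw [this]

lemma key (hn : 2 ≤ n) (hE : E n f = E n g) (k : Fin ((n - 1) / 2))
    (hk : f k = true) : g k = true := by
  have hkl := k.isLt
  have hvlt : k.val + 1 < n + 1 := by omega
  let v : Fin (n + 1) := ⟨k.val + 1, hvlt⟩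
  have hvval : v.val = k.val + 1 := rfl
  have hv0 : v ≠ 0 := by
    intro h
    have : v.val = (0 : Fin (n + 1)).val := by rw [h]
    rw [hvval] at this
    simp at this
  have hswf : SWp n f v.val := ⟨k, hk, Or.inl rfl⟩
  have hPf : P n f v = nn n := by unfold P; rw [if_pos hswf]
  have hm : s(v, nn n) ∈ E n g := by
    rw [← hE]
    refine ⟨v, hv0, ?_⟩
    show s(v, P n f v) = s(v, nn n)
    rw [hPf]
  obtain ⟨w, hw, he⟩ := hm
  rw [Sym2.eq_iff] at he
  rcases he with ⟨h1, h2⟩ | ⟨h1, h2⟩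
  · rw [h1] at h2
    have hsw : SWp n g v.val := by
      by_contra hcon
      unfold P at h2
      rw [if_neg hcon] at h2
      exact nn_ne_zero hn h2.symm
    obtain ⟨k', hk', hx⟩ := hsw
    have hk'l := k'.isLt
    rw [hvval] at hx
    rcases hx with hx | hx
    · have : k' = k := Fin.ext (by omega)
      rwa [this] at hk'
    · exfalso
      omega
  · exfalso
    rw [h1, P_nn] at h2
    exact hv0 h2.symm

end Stmt6

/-- the graceful colouring of `K_{n+1}` (`n ≥ 2`) yields at least
`2^{⌊(n-1)/2⌋}` distinct heterochromatic spanning trees. -/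
theorem stmt6 (n : ℕ) (hn : 2 ≤ n) :
    2 ^ ((n - 1) / 2) ≤
      {T : SimpleGraph (Fin (n + 1)) | T.IsTree ∧ Set.InjOn (gcol n) T.edgeSet}.ncard := by
  classical
  set S := {T : SimpleGraph (Fin (n + 1)) | T.IsTree ∧ Set.InjOn (gcol n) T.edgeSet} with hS
  have hmem : ∀ f : Fin ((n - 1) / 2) → Bool, Stmt6.T n f ∈ S := fun f =>
    ⟨Stmt6.isTree_T hn, Stmt6.injOn_gcol⟩
  let Φ : (Fin ((n - 1) / 2) → Bool) → S := fun f => ⟨Stmt6.T n f, hmem f⟩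
  have hΦ : Function.Injective Φ := by
    intro f g h
    have hT : Stmt6.T n f = Stmt6.T n g := congrArg Subtype.val h
    have hE : Stmt6.E n f = Stmt6.E n g := by
      rw [← Stmt6.edgeSet_T, ← Stmt6.edgeSet_T, hT]
    funext k
    cases hfk : f k <;> cases hgk : g k
    · rfl
    · exact absurd (Stmt6.key hn hE.symm k hgk) (by simp [hfk])
    · exact absurd (Stmt6.key hn hE k hfk) (by simp [hgk])
    · rfl
  calc 2 ^ ((n - 1) / 2) = Nat.card (Fin ((n - 1) / 2) → Bool) := by
        simp [Nat.card_eq_fintype_card]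
    _ ≤ Nat.card S := Nat.card_le_card_of_injective Φ hΦ
    _ = S.ncard := Nat.card_coe_set_eq S
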